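/- Let X be a pre-Riesz space and let B, C ⊆ X be bands. Then (a) B ∩ C = (B^⊥ + C^⊥)^⊥, where B^⊥ + C^⊥ denotes the set of all sums b + c with b ∈ B^⊥ and c ∈ C^⊥; and (b) (B + C)^⊥⊥ = (B^⊥ ∩ C^⊥)^⊥; in particular, if B + C is a band, then B + C = (B^⊥ ∩ C^⊥)^⊥. -/

import Mathlib

open Pointwise

variable {X : Type*} [AddCommGroup X] [PartialOrder X] [IsOrderedAddMonoid X] [Module ℝ X]
    [PosSMulStrictMono ℝ X]

/-- Two elements of an ordered vector space are disjoint if the sets `{x+y, -x-y}` and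
`{x-y, y-x}` have the same set of upper bounds. -/
def UDisjoint (x y : X) : Prop :=
  upperBounds ({x + y, -x - y} : Set X) = upperBounds ({x - y, y - x} : Set X)

/-- The disjoint complement `S^⊥` of a set `S`. -/
def dComp (S : Set X) : Set X := {x : X | ∀ s ∈ S, UDisjoint x s}

/-- A band: a set equal to its double disjoint complement. -/
def IsBand (B : Set X) : Prop := B = dComp (dComp B)

/-- A projection band: a band `B` with `B ∩ B^⊥ = {0}` and `B + B^⊥ = X`. -/
def IsProjBand (B : Set X) : Prop :=
  IsBand B ∧ B ∩ dComp B = {0} ∧ ∀ x : X, ∃ b ∈ B, ∃ c ∈ dComp B, x = b + c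

/-- A positive linear operator. -/
def IsPosMap (T : X →ₗ[ℝ] X) : Prop := ∀ x : X, 0 ≤ x → 0 ≤ T x

/-- A band projection: a linear projection whose range is a projection band and whose
kernel is the disjoint complement of the range. -/
def IsBandProj (P : X →ₗ[ℝ] X) : Prop :=
  P ∘ₗ P = P ∧ IsProjBand (Set.range ⇑P) ∧ (LinearMap.ker P : Set X) = dComp (Set.range ⇑P)

/-- A pre-Riesz space: for every nonempty finite `A ⊆ X` and every `x`, if the upper bounds
of `x + A` are contained in the upper bounds of `A`, then `x ≥ 0`. -/
def IsPreRiesz (X : Type*) [AddCommGroup X] [PartialOrder X] [IsOrderedAddMonoid X] [Module ℝ X]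
    [PosSMulStrictMono ℝ X] : Prop :=
  ∀ (A : Set X) (x : X), A.Finite → A.Nonempty →
    upperBounds ((x + ·) '' A) ⊆ upperBounds A → 0 ≤ x


set_option linter.unusedSectionVars false
set_option linter.unusedVariables false
set_option maxHeartbeats 1000000

lemma mem_ub_pair {a b u : X} : u ∈ upperBounds ({a, b} : Set X) ↔ a ≤ u ∧ b ≤ u := by
  simp [upperBounds]

lemma half_of_double {p m : X} (h : p + p ≤ m) : p ≤ (2⁻¹:ℝ) • m := by
  have h2 := smul_le_smul_of_nonneg_left h (by norm_num : (0:ℝ) ≤ 2⁻¹)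
  rwa [← two_smul ℝ p, smul_smul, inv_mul_cancel₀ (by norm_num : (2:ℝ) ≠ 0), one_smul] at h2

lemma double_of_half {p m : X} (h : p ≤ (2⁻¹:ℝ) • m) : p + p ≤ m := by
  have h2 := smul_le_smul_of_nonneg_left h (by norm_num : (0:ℝ) ≤ 2)
  rwa [two_smul ℝ p, smul_smul, mul_inv_cancel₀ (by norm_num : (2:ℝ) ≠ 0), one_smul] at h2

lemma avg {e v u : X} (h1 : e + v ≤ u) (h2 : e - v ≤ u) : e ≤ u := by
  have h3 : e + e ≤ u + u := (by abel : e + e = (e+v)+(e-v)).trans_le (add_le_add h1 h2)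
  have h4 := half_of_double h3
  calc e ≤ (2⁻¹:ℝ) • (u+u) := h4
  _ = u := by rw [← two_smul ℝ u, smul_smul, inv_mul_cancel₀ (by norm_num : (2:ℝ) ≠ 0), one_smul]

lemma udisjoint_key {x y : X} (h : UDisjoint x y) :
    ∀ u : X, (x + y ≤ u ∧ -x - y ≤ u) ↔ (x - y ≤ u ∧ y - x ≤ u) := by
  intro u
  have h' : upperBounds ({x+y, -x-y}:Set X) = upperBounds ({x-y, y-x}:Set X) := h
  rw [← mem_ub_pair, ← mem_ub_pair, h']

lemma udisjoint_symm {x y : X} (h : UDisjoint x y) : UDisjoint y x := by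
  have key := udisjoint_key h
  show upperBounds ({y + x, -y - x} : Set X) = upperBounds ({y - x, x - y} : Set X)
  ext u
  rw [mem_ub_pair, mem_ub_pair]
  constructor
  · rintro ⟨a, b⟩
    have hk := (key u).mp ⟨(by abel : x+y = y+x).trans_le a, (by abel : -x-y = -y-x).trans_le b⟩
    exact ⟨hk.2, hk.1⟩
  · rintro ⟨a, b⟩
    have hk := (key u).mpr ⟨b, a⟩
    exact ⟨(by abel : y+x = x+y).trans_le hk.1, (by abel : -y-x = -x-y).trans_le hk.2⟩

lemma udisjoint_neg_left {x y : X} (h : UDisjoint x y) : UDisjoint (-x) y := by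
  have key := udisjoint_key h
  show upperBounds ({-x + y, -(-x) - y} : Set X) = upperBounds ({-x - y, y - -x} : Set X)
  ext u
  rw [mem_ub_pair, mem_ub_pair]
  constructor
  · rintro ⟨a, b⟩
    have hk := (key u).mpr ⟨(by abel : x - y = -(-x) - y).trans_le b,
      (by abel : y - x = -x + y).trans_le a⟩
    exact ⟨hk.2, (by abel : y - -x = x + y).trans_le hk.1⟩
  · rintro ⟨a, b⟩
    have hk := (key u).mp ⟨(by abel : x + y = y - -x).trans_le b, a⟩
    exact ⟨(by abel : -x + y = y - x).trans_le hk.2, (by abel : -(-x) - y = x - y).trans_le hk.1⟩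

lemma udisjoint_neg_right {x y : X} (h : UDisjoint x y) : UDisjoint x (-y) := by
  have key := udisjoint_key h
  show upperBounds ({x + -y, -x - -y} : Set X) = upperBounds ({x - -y, -y - x} : Set X)
  ext u
  rw [mem_ub_pair, mem_ub_pair]
  constructor
  · rintro ⟨a, b⟩
    have hk := (key u).mpr ⟨(by abel : x - y = x + -y).trans_le a,
      (by abel : y - x = -x - -y).trans_le b⟩
    exact ⟨(by abel : x - -y = x + y).trans_le hk.1, (by abel : -y - x = -x - y).trans_le hk.2⟩
  · rintro ⟨a, b⟩
    have hk := (key u).mp ⟨(by abel : x + y = x - -y).trans_le a,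
      (by abel : -x - y = -y - x).trans_le b⟩
    exact ⟨(by abel : x + -y = x - y).trans_le hk.1, (by abel : -x - -y = y - x).trans_le hk.2⟩

lemma udisjoint_zero {x : X} : UDisjoint x 0 := by
  unfold UDisjoint
  norm_num

lemma cancel_singleton (hX : IsPreRiesz X) {D : Set X} (hD : D.Finite) (hne : D.Nonempty)
    {u g : X} (h : ∀ v : X, (∀ d ∈ D, u + d ≤ v) → (∀ d ∈ D, g + d ≤ v)) : g ≤ u := by
  have h0 : (0:X) ≤ u - g := by
    refine hX ((u + ·) '' D) (u - g) (hD.image _) (hne.image _) ?_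
    intro v hv
    have key : ∀ d ∈ D, u + d ≤ v - (u - g) := by
      intro d hd
      have h1 : (u - g) + (u + d) ≤ v :=
        hv (Set.mem_image_of_mem _ (Set.mem_image_of_mem _ hd))
      rw [le_sub_iff_add_le]
      exact (by abel : (u+d) + (u-g) = (u-g)+(u+d)).trans_le h1
    have key2 := h _ key
    rintro a ⟨d, hd, rfl⟩
    have h3 : (g + d) + (u - g) ≤ v := le_sub_iff_add_le.mp (key2 d hd)
    exact (by abel : u + d = (g+d)+(u-g)).trans_le h3
  have h1 := add_le_add_right h0 g
  simpa using h1

lemma L1 (hX : IsPreRiesz X) {x y : X} (h : UDisjoint x y) {u : X}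
    (h1 : x ≤ u) (h2 : -x ≤ u) (h3 : y ≤ u) (h4 : -y ≤ u) : x + y ≤ u := by
  refine cancel_singleton hX (D := {x - y, y - x})
    ((Set.finite_singleton _).insert _) ⟨x - y, by simp⟩ ?_
  intro v hv
  have hv1 : u + (x - y) ≤ v := hv _ (by simp)
  have hv2 : u + (y - x) ≤ v := hv _ (by simp)
  have hm : v - u ∈ upperBounds ({x - y, y - x} : Set X) := by
    rw [mem_ub_pair]
    constructor
    · rw [le_sub_iff_add_le]; exact (by abel : (x-y)+u = u+(x-y)).trans_le hv1
    · rw [le_sub_iff_add_le]; exact (by abel : (y-x)+u = u+(y-x)).trans_le hv2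
  have hm' : x + y ≤ v - u ∧ -x - y ≤ v - u := by
    have h' : upperBounds ({x+y, -x-y}:Set X) = upperBounds ({x-y, y-x}:Set X) := h
    rw [← h'] at hm
    exact mem_ub_pair.mp hm
  have A1 : u + (x + y) ≤ v := by
    have := le_sub_iff_add_le.mp hm'.1
    exact (by abel : u + (x+y) = (x+y)+u).trans_le this
  intro d hd
  rcases hd with rfl | hd
  · -- d = x - y : goal (x+y)+(x-y) ≤ v, i.e. x + x ≤ v
    have e1 : (x + x) + y ≤ v := (by abel : (x+x)+y = x + (x+y)).trans_le
      ((add_le_add_left h1 (x+y)).trans A1)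
    have e2 : (x + x) - y ≤ v := (by abel : (x+x)-y = x + (x-y)).trans_le
      ((add_le_add_left h1 (x-y)).trans hv1)
    exact (by abel : (x+y)+(x-y) = x+x).trans_le (avg e1 e2)
  · rcases hd with rfl
    have e1 : (y + y) + x ≤ v := (by abel : (y+y)+x = y + (x+y)).trans_le
      ((add_le_add_left h3 (x+y)).trans A1)
    have e2 : (y + y) - x ≤ v := (by abel : (y+y)-x = y + (y-x)).trans_le
      ((add_le_add_left h3 (y-x)).trans hv2)
    exact (by abel : (x+y)+(y-x) = y+y).trans_le (avg (v := x) e1 e2)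

lemma L1four (hX : IsPreRiesz X) {x y n : X} (h : UDisjoint x y)
    (nx : x ≤ n) (nx' : -x ≤ n) (ny : y ≤ n) (ny' : -y ≤ n) :
    x + y ≤ n ∧ x - y ≤ n ∧ -x + y ≤ n ∧ -x - y ≤ n := by
  have hnnx : -(-x) ≤ n := by rwa [neg_neg]
  have hnny : -(-y) ≤ n := by rwa [neg_neg]
  refine ⟨L1 hX h nx nx' ny ny', ?_, ?_, ?_⟩
  · exact (by abel : x - y = x + -y).trans_le (L1 hX (udisjoint_neg_right h) nx nx' ny' hnny)
  · exact L1 hX (udisjoint_neg_left h) nx' hnnx ny ny'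
  · exact (by abel : -x - y = -x + -y).trans_le
      (L1 hX (udisjoint_neg_left (udisjoint_neg_right h)) nx' hnnx ny' hnny)

lemma E_lemma (hX : IsPreRiesz X) {x y z : X} (h1 : UDisjoint x y) (h2 : UDisjoint x z)
    {v : X} (hx : x ≤ v) (hx' : -x ≤ v) (hw : y + z ≤ v) (hw' : -(y+z) ≤ v) :
    x + (y + z) ≤ v := by
  set P : Set X := {x, -x, y, -y} with hPdef
  set Q : Set X := {x, -x, z, -z} with hQdef
  have hP : P.Finite := Set.toFinite _
  have hQ : Q.Finite := Set.toFinite _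
  refine cancel_singleton hX (D := Set.image2 (· + ·) P Q) (Set.Finite.image2 _ hP hQ)
    ⟨x + x, Set.mem_image2_of_mem (by simp [hPdef]) (by simp [hQdef])⟩ ?_
  intro m hm
  have hm' : ∀ p ∈ P, ∀ q ∈ Q, v + (p + q) ≤ m := fun p hp q hq =>
    hm _ (Set.mem_image2_of_mem hp hq)
  set T : Set X := {x, -x, y + z, -(y+z)} with hTdef
  have sub1 : ∀ t ∈ T, ∀ p ∈ P, ∀ q ∈ Q, t + (p + q) ≤ m := by
    intro t ht p hp q hq
    have htv : t ≤ v := by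
      simp only [hTdef, Set.mem_insert_iff, Set.mem_singleton_iff] at ht
      rcases ht with rfl | rfl | rfl | rfl
      exacts [hx, hx', hw, hw']
    exact (add_le_add_left htv (p+q)).trans (hm' p hp q hq)
  have sub2 : ∀ t ∈ T, ∀ s ∈ ({x+y, x-y, -x+y, -x-y} : Set X), ∀ q ∈ Q, t + s + q ≤ m := by
    intro t ht s hs q hq
    have hn : ∀ p ∈ P, p ≤ m - (t + q) := by
      intro p hp
      rw [le_sub_iff_add_le]
      exact (by abel : p + (t+q) = t + (p+q)).trans_le (sub1 t ht p hp q hq)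
    have h4 := L1four hX h1 (hn x (by simp [hPdef])) (hn (-x) (by simp [hPdef]))
      (hn y (by simp [hPdef])) (hn (-y) (by simp [hPdef]))
    simp only [Set.mem_insert_iff, Set.mem_singleton_iff] at hs
    have conv : ∀ s' : X, s' ≤ m - (t + q) → t + s' + q ≤ m := by
      intro s' hs'
      have := le_sub_iff_add_le.mp hs'
      exact (by abel : t + s' + q = s' + (t+q)).trans_le this
    rcases hs with rfl | rfl | rfl | rfl
    exacts [conv _ h4.1, conv _ h4.2.1, conv _ h4.2.2.1, conv _ h4.2.2.2]
  have sub2' : ∀ t ∈ T, ∀ p ∈ P, ∀ s' ∈ ({x+z, x-z, -x+z, -x-z} : Set X), t + p + s' ≤ m := by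
    intro t ht p hp s' hs'
    have hn : ∀ q ∈ Q, q ≤ m - (t + p) := by
      intro q hq
      rw [le_sub_iff_add_le]
      exact (by abel : q + (t+p) = t + (p+q)).trans_le (sub1 t ht p hp q hq)
    have h4 := L1four hX h2 (hn x (by simp [hQdef])) (hn (-x) (by simp [hQdef]))
      (hn z (by simp [hQdef])) (hn (-z) (by simp [hQdef]))
    simp only [Set.mem_insert_iff, Set.mem_singleton_iff] at hs'
    have conv : ∀ s : X, s ≤ m - (t + p) → t + p + s ≤ m := by
      intro s hs
      have := le_sub_iff_add_le.mp hs
      exact (by abel : t + p + s = s + (t+p)).trans_le this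
    rcases hs' with rfl | rfl | rfl | rfl
    exacts [conv _ h4.1, conv _ h4.2.1, conv _ h4.2.2.1, conv _ h4.2.2.2]
  have sub3 : ∀ t ∈ T, ∀ s ∈ ({x+y, x-y, -x+y, -x-y} : Set X),
      ∀ s' ∈ ({x+z, x-z, -x+z, -x-z} : Set X), t + s + s' ≤ m := by
    intro t ht s hs s' hs'
    have hn : ∀ q ∈ Q, q ≤ m - (t + s) := by
      intro q hq
      rw [le_sub_iff_add_le]
      exact (by abel : q + (t+s) = t + s + q).trans_le (sub2 t ht s hs q hq)
    have h4 := L1four hX h2 (hn x (by simp [hQdef])) (hn (-x) (by simp [hQdef]))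
      (hn z (by simp [hQdef])) (hn (-z) (by simp [hQdef]))
    simp only [Set.mem_insert_iff, Set.mem_singleton_iff] at hs'
    have conv : ∀ r : X, r ≤ m - (t + s) → t + s + r ≤ m := by
      intro r hr
      have := le_sub_iff_add_le.mp hr
      exact (by abel : t + s + r = r + (t+s)).trans_le this
    rcases hs' with rfl | rfl | rfl | rfl
    exacts [conv _ h4.1, conv _ h4.2.1, conv _ h4.2.2.1, conv _ h4.2.2.2]
  -- memberships helpers
  have tw : (y + z) ∈ T := by simp [hTdef]
  have tx : x ∈ T := by simp [hTdef]
  have tx' : -x ∈ T := by simp [hTdef]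
  intro d hd
  rw [Set.mem_image2] at hd
  obtain ⟨p, hp, q, hq, rfl⟩ := hd
  have hq' : q = x ∨ q = -x ∨ q = z ∨ q = -z := by
    simpa [hQdef, Set.mem_insert_iff, Set.mem_singleton_iff] using hq
  simp only [hPdef, Set.mem_insert_iff, Set.mem_singleton_iff] at hp
  rcases hp with h | h | h | h
  · rw [h]  -- p = x
    rcases hq' with h' | h' | h' | h' <;> rw [h']
    · exact (by abel : x+(y+z)+(x+x) = x + (x+y) + (x+z)).trans_le
        (sub3 _ tx _ (by simp) _ (by simp))
    · exact (by abel : x+(y+z)+(x+ -x) = x + (x+y) + (-x+z)).trans_le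
        (sub3 _ tx _ (by simp) _ (by simp))
    · exact (by abel : x+(y+z)+(x+z) = (y+z) + x + (x+z)).trans_le
        (sub2' _ tw _ (by simp [hPdef]) _ (by simp))
    · exact (by abel : x+(y+z)+(x+ -z) = (y+z) + x + (x-z)).trans_le
        (sub2' _ tw _ (by simp [hPdef]) _ (by simp))
  · rw [h]  -- p = -x
    rcases hq' with h' | h' | h' | h' <;> rw [h']
    · exact (by abel : x+(y+z)+(-x+x) = -x + (x+y) + (x+z)).trans_le
        (sub3 _ tx' _ (by simp) _ (by simp))
    · exact (by abel : x+(y+z)+(-x+ -x) = -x + (x+y) + (-x+z)).trans_le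
        (sub3 _ tx' _ (by simp) _ (by simp))
    · exact (by abel : x+(y+z)+(-x+z) = (y+z) + -x + (x+z)).trans_le
        (sub2' _ tw _ (by simp [hPdef]) _ (by simp))
    · exact (by abel : x+(y+z)+(-x+ -z) = (y+z) + -x + (x-z)).trans_le
        (sub2' _ tw _ (by simp [hPdef]) _ (by simp))
  · rw [h]  -- p = y
    exact (by abel : x+(y+z)+(y+q) = (y+z) + (x+y) + q).trans_le
      (sub2 _ tw _ (by simp) q hq)
  · rw [h]  -- p = -y
    exact (by abel : x+(y+z)+(-y+q) = (y+z) + (x-y) + q).trans_le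
      (sub2 _ tw _ (by simp) q hq)

lemma ub_step (hX : IsPreRiesz X) {x y z u : X} (h1 : UDisjoint x y) (h2 : UDisjoint x z)
    (hu1 : x + (y + z) ≤ u) (hu2 : -(x + (y + z)) ≤ u) : x - (y + z) ≤ u := by
  refine cancel_singleton hX (D := {x - (y+z), (y+z) - x})
    ((Set.finite_singleton _).insert _) ⟨x - (y+z), by simp⟩ ?_
  intro m hm
  have hma : u + (x - (y+z)) ≤ m := hm _ (by simp)
  have hmb : u + ((y+z) - x) ≤ m := hm _ (by simp)
  have H2x : x + x ≤ m :=
    (by abel : x + x = (x+(y+z)) + (x - (y+z))).trans_le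
      ((add_le_add_left hu1 _).trans hma)
  have H2w : (y+z) + (y+z) ≤ m :=
    (by abel : (y+z)+(y+z) = (x+(y+z)) + ((y+z) - x)).trans_le
      ((add_le_add_left hu1 _).trans hmb)
  have H2x' : -x + -x ≤ m :=
    (by abel : -x + -x = (-(x+(y+z))) + ((y+z) - x)).trans_le
      ((add_le_add_left hu2 _).trans hmb)
  have H2w' : -(y+z) + -(y+z) ≤ m :=
    (by abel : -(y+z) + -(y+z) = (-(x+(y+z))) + (x - (y+z))).trans_le
      ((add_le_add_left hu2 _).trans hma)
  have hhx : x ≤ (2⁻¹:ℝ) • m := half_of_double H2x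
  have hhx' : -x ≤ (2⁻¹:ℝ) • m := half_of_double H2x'
  have hhw : (-y) + (-z) ≤ (2⁻¹:ℝ) • m :=
    (by abel : -y + -z = -(y+z)).trans_le (half_of_double H2w')
  have hhw' : -((-y) + (-z)) ≤ (2⁻¹:ℝ) • m :=
    (by abel : -(-y + -z) = y + z).trans_le (half_of_double H2w)
  have key : x + ((-y) + (-z)) ≤ (2⁻¹:ℝ) • m :=
    E_lemma hX (udisjoint_neg_right h1) (udisjoint_neg_right h2) hhx hhx' hhw hhw'
  have dbl := double_of_half key
  have h0 : (0:X) ≤ m := by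
    refine avg (e := 0) (v := x + x) ?_ ?_
    · exact (by abel : (0:X) + (x+x) = x + x).trans_le H2x
    · exact (by abel : (0:X) - (x+x) = -x + -x).trans_le H2x'
  intro d hd
  rcases hd with rfl | hd
  · exact (by abel : (x - (y+z)) + (x - (y+z)) = (x + (-y + -z)) + (x + (-y + -z))).trans_le dbl
  · rcases hd with rfl
    exact (by abel : (x - (y+z)) + ((y+z) - x) = 0).trans_le h0

lemma udisjoint_add (hX : IsPreRiesz X) {x y z : X} (h1 : UDisjoint x y) (h2 : UDisjoint x z) :
    UDisjoint x (y + z) := by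
  show upperBounds ({x + (y+z), -x - (y+z)} : Set X)
      = upperBounds ({x - (y+z), (y+z) - x} : Set X)
  ext u
  rw [mem_ub_pair, mem_ub_pair]
  constructor
  · rintro ⟨ha, hb⟩
    have hb' : -(x + (y+z)) ≤ u := (by abel : -(x+(y+z)) = -x - (y+z)).trans_le hb
    constructor
    · exact ub_step hX h1 h2 ha hb'
    · have hA : -x + (-y + -z) ≤ u := (by abel : -x + (-y + -z) = -x - (y+z)).trans_le hb
      have hB : -(-x + (-y + -z)) ≤ u := (by abel : -(-x + (-y + -z)) = x + (y+z)).trans_le ha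
      have := ub_step hX (udisjoint_neg_left (udisjoint_neg_right h1))
        (udisjoint_neg_left (udisjoint_neg_right h2)) hA hB
      exact (by abel : (y+z) - x = -x - (-y + -z)).trans_le this
  · rintro ⟨hc, hd⟩
    constructor
    · have hA : x + (-y + -z) ≤ u := (by abel : x + (-y + -z) = x - (y+z)).trans_le hc
      have hB : -(x + (-y + -z)) ≤ u := (by abel : -(x + (-y + -z)) = (y+z) - x).trans_le hd
      have := ub_step hX (udisjoint_neg_right h1) (udisjoint_neg_right h2) hA hB
      exact (by abel : x + (y+z) = x - (-y + -z)).trans_le this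
    · have hA : -x + (y + z) ≤ u := (by abel : -x + (y+z) = (y+z) - x).trans_le hd
      have hB : -(-x + (y + z)) ≤ u := (by abel : -(-x + (y+z)) = x - (y+z)).trans_le hc
      have := ub_step hX (udisjoint_neg_left h1) (udisjoint_neg_left h2) hA hB
      exact (by abel : -x - (y+z) = -x - (y+z)).trans_le this

lemma zero_mem_dComp (S : Set X) : (0:X) ∈ dComp S :=
  fun s _ => udisjoint_symm udisjoint_zero

lemma dComp_antitone {S T : Set X} (h : S ⊆ T) : dComp T ⊆ dComp S :=
  fun x hx s hs => hx s (h hs)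

/-- For bands `B` and `C`: (a) `B ∩ C = (B^⊥ + C^⊥)^⊥`; (b) `(B+C)^⊥⊥ = (B^⊥ ∩ C^⊥)^⊥`,
and in particular if `B + C` is a band then `B + C = (B^⊥ ∩ C^⊥)^⊥`. -/
theorem stmt_2 (hX : IsPreRiesz X) (B C : Set X) (hB : IsBand B) (hC : IsBand C) :
    B ∩ C = dComp (dComp B + dComp C) ∧
    dComp (dComp (B + C)) = dComp (dComp B ∩ dComp C) ∧
    (IsBand (B + C) → B + C = dComp (dComp B ∩ dComp C)) := by
  have hB0 : (0:X) ∈ B := by rw [hB]; exact zero_mem_dComp _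
  have hC0 : (0:X) ∈ C := by rw [hC]; exact zero_mem_dComp _
  have part1 : B ∩ C = dComp (dComp B + dComp C) := by
    apply Set.Subset.antisymm
    · rintro v ⟨hvB, hvC⟩ s hs
      rw [Set.mem_add] at hs
      obtain ⟨b', hb', c', hc', rfl⟩ := hs
      have d1 : UDisjoint v b' := by rw [hB] at hvB; exact hvB b' hb'
      have d2 : UDisjoint v c' := by rw [hC] at hvC; exact hvC c' hc'
      exact udisjoint_add hX d1 d2
    · intro v hv
      constructor
      · rw [hB]
        intro s hs
        exact hv s (Set.mem_add.mpr ⟨s, hs, 0, zero_mem_dComp _, add_zero s⟩)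
      · rw [hC]
        intro s hs
        exact hv s (Set.mem_add.mpr ⟨0, zero_mem_dComp _, s, hs, zero_add s⟩)
  have hsub1 : dComp B ∩ dComp C ⊆ dComp (B + C) := by
    rintro v ⟨hvB, hvC⟩ s hs
    obtain ⟨b, hb, c, hc, rfl⟩ := Set.mem_add.mp hs
    exact udisjoint_add hX (hvB b hb) (hvC c hc)
  have hsub2 : dComp (B + C) ⊆ dComp B ∩ dComp C := by
    intro v hv
    exact ⟨fun b hb => hv b (Set.mem_add.mpr ⟨b, hb, 0, hC0, add_zero b⟩),
      fun c hc => hv c (Set.mem_add.mpr ⟨0, hB0, c, hc, zero_add c⟩)⟩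
  have part2 : dComp (dComp (B+C)) = dComp (dComp B ∩ dComp C) :=
    Set.Subset.antisymm (dComp_antitone hsub1) (dComp_antitone hsub2)
  refine ⟨part1, part2, fun hband => ?_⟩
  rw [← part2]
  exact hband
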